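/- Let η_t be defined from (η₀, E, G) as in the explicit fluid representation: ⟨f, η_t⟩ = ∫_{[0,H)} f(x+t)(1-G(x+t))/(1-G(x)) dη₀(x) + ∫_{[0,t]} f(t-s)(1-G(t-s)) dE(s). Assume additionally: (i) for every x ≥ 0, if η₀({x}) > 0 then η₀((x, x+ε)) > 0 for all ε > 0; (ii) for every t ≥ 0, if E(t) - E(t-) > 0 then E(t-) - E(t-ε) > 0 for all ε ∈ (0,t); and (iii) G is continuous. Then for every t > 0 and L ∈ [0,H): if η_t({L}) > 0 then η_t((L, L+ε)) > 0 for all sufficiently small ε > 0. -/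

import Mathlib

open MeasureTheory Set
open scoped ENNReal

private lemma lint_pos' {μ : Measure ℝ} {S U : Set ℝ} {f : ℝ → ℝ≥0∞} (hf : Measurable f)
    (hU : MeasurableSet U) (hUS : U ⊆ S) (hUf : ∀ x ∈ U, f x ≠ 0)
    (hUpos : 0 < μ U) : 0 < ∫⁻ x in S, f x ∂μ := by
  rw [lintegral_pos_iff_support hf]
  have h0 : 0 < μ.restrict S U := by
    rwa [Measure.restrict_apply hU, Set.inter_eq_self_of_subset_left hUS]
  exact h0.trans_le (measure_mono fun x hx => hUf x hx)

private lemma lint_pos_rev' {μ : Measure ℝ} {S A : Set ℝ} {f : ℝ → ℝ≥0∞} (hf : Measurable f)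
    (hA : MeasurableSet A) (hsupp : Function.support f ⊆ A)
    (h : 0 < ∫⁻ x in S, f x ∂μ) : 0 < μ (A ∩ S) := by
  rw [lintegral_pos_iff_support hf] at h
  have h2 := h.trans_le (measure_mono hsupp)
  rwa [Measure.restrict_apply hA] at h2

theorem stmt_7 (G : ℝ → ℝ) (hGc : Continuous G) (hGm : Monotone G)
    (hG0 : ∀ x, 0 ≤ G x) (hG1 : ∀ x, G x ≤ 1)
    (Hr : ℝ) (hGlt : ∀ x : ℝ, 0 ≤ x → x < Hr → G x < 1)
    (η₀ : Measure ℝ) [IsFiniteMeasure η₀]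
    (E : StieltjesFunction ℝ) (hE0 : ∀ s : ℝ, s ≤ 0 → E s = 0)
    (η : ℝ → Measure ℝ)
    (hη : ∀ t : ℝ, 0 ≤ t → ∀ A : Set ℝ, MeasurableSet A →
      η t A = (∫⁻ x in Set.Ico (0:ℝ) Hr,
          Set.indicator A (fun _ => (1:ℝ≥0∞)) (x + t)
            * ENNReal.ofReal ((1 - G (x + t)) / (1 - G x)) ∂η₀)
        + ∫⁻ s in Set.Icc (0:ℝ) t,
            Set.indicator A (fun _ => (1:ℝ≥0∞)) (t - s)
              * ENNReal.ofReal (1 - G (t - s)) ∂E.measure)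
    (hi : ∀ x : ℝ, 0 ≤ x → 0 < η₀ {x} → ∀ ε : ℝ, 0 < ε → 0 < η₀ (Set.Ioo x (x + ε)))
    (hii : ∀ t : ℝ, 0 ≤ t → Function.leftLim (fun s => E s) t < E t →
      ∀ ε : ℝ, 0 < ε → ε < t → E (t - ε) < Function.leftLim (fun s => E s) t) :
    ∀ t : ℝ, 0 < t → ∀ L : ℝ, 0 ≤ L → L < Hr → 0 < η t {L} →
      ∃ ε₀ > 0, ∀ ε : ℝ, 0 < ε → ε ≤ ε₀ → 0 < η t (Set.Ioo L (L + ε)) := by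
  intro t ht L hL0 hLH hpos
  have htnn : (0:ℝ) ≤ t := ht.le
  -- measurability of the integrands
  have hmeas1 : ∀ A : Set ℝ, MeasurableSet A → Measurable (fun x : ℝ =>
      Set.indicator A (fun _ => (1:ℝ≥0∞)) (x + t)
        * ENNReal.ofReal ((1 - G (x + t)) / (1 - G x))) := by
    intro A hA
    apply Measurable.mul
    · exact (measurable_const.indicator hA).comp (measurable_add_const t)
    · exact ENNReal.measurable_ofReal.comp
        (((continuous_const.sub (hGc.comp (continuous_add_right t))).measurable).div
          (continuous_const.sub hGc).measurable)
  have hmeas2 : ∀ A : Set ℝ, MeasurableSet A → Measurable (fun s : ℝ =>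
      Set.indicator A (fun _ => (1:ℝ≥0∞)) (t - s)
        * ENNReal.ofReal (1 - G (t - s))) := by
    intro A hA
    apply Measurable.mul
    · exact (measurable_const.indicator hA).comp (measurable_const.sub measurable_id)
    · exact ENNReal.measurable_ofReal.comp
        ((continuous_const.sub (hGc.comp (continuous_const.sub continuous_id))).measurable)
  rw [hη t htnn {L} (measurableSet_singleton L)] at hpos
  set a := ∫⁻ x in Set.Ico (0:ℝ) Hr,
      Set.indicator {L} (fun _ => (1:ℝ≥0∞)) (x + t)
        * ENNReal.ofReal ((1 - G (x + t)) / (1 - G x)) ∂η₀ with ha_def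
  set b := ∫⁻ s in Set.Icc (0:ℝ) t,
      Set.indicator {L} (fun _ => (1:ℝ≥0∞)) (t - s)
        * ENNReal.ofReal (1 - G (t - s)) ∂E.measure with hb_def
  have hor : 0 < a ∨ 0 < b := by
    by_contra h
    push_neg at h
    have h1 : a = 0 := le_antisymm h.1 (zero_le (a := _))
    have h2 : b = 0 := le_antisymm h.2 (zero_le (a := _))
    rw [h1, h2, add_zero] at hpos
    exact lt_irrefl 0 hpos
  rcases hor with hA | hB
  · -- mass from initial measure at x₀ = L - t
    have hrev := lint_pos_rev' (hmeas1 {L} (measurableSet_singleton L))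
      (measurableSet_singleton (L - t)) ?_ hA
    swap
    · intro x hx
      simp only [Function.mem_support, ne_eq] at hx
      by_contra hne
      have hxt : x + t ∉ ({L} : Set ℝ) := by
        simp only [Set.mem_singleton_iff]
        intro h; apply hne; simp only [Set.mem_singleton_iff]; linarith
      rw [Set.indicator_of_notMem hxt, zero_mul] at hx
      exact hx rfl
    have hmem : L - t ∈ Set.Ico (0:ℝ) Hr := by
      by_contra hmem
      have : ({L - t} : Set ℝ) ∩ Set.Ico (0:ℝ) Hr = ∅ := by
        ext y; simp only [Set.mem_inter_iff, Set.mem_singleton_iff, Set.mem_empty_iff_false,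
          iff_false, not_and]
        rintro rfl; exact hmem
      rw [this] at hrev; simp at hrev
    have hη₀pos : 0 < η₀ {L - t} :=
      hrev.trans_le (measure_mono Set.inter_subset_left)
    refine ⟨Hr - L, by linarith, fun ε hε hεle => ?_⟩
    have hIoo : 0 < η₀ (Set.Ioo (L - t) (L - t + ε)) := hi (L - t) hmem.1 hη₀pos ε hε
    rw [hη t htnn (Set.Ioo L (L + ε)) measurableSet_Ioo]
    have hfirst : 0 < ∫⁻ x in Set.Ico (0:ℝ) Hr,
        Set.indicator (Set.Ioo L (L + ε)) (fun _ => (1:ℝ≥0∞)) (x + t)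
          * ENNReal.ofReal ((1 - G (x + t)) / (1 - G x)) ∂η₀ := by
      apply lint_pos' (hmeas1 _ measurableSet_Ioo) measurableSet_Ioo ?_ ?_ hIoo
      · intro x hx
        constructor
        · linarith [hx.1, hmem.1]
        · linarith [hx.2, ht]
      · intro x hx
        have hx1 : L < x + t := by linarith [hx.1]
        have hx2 : x + t < L + ε := by linarith [hx.2]
        have hxt0 : (0:ℝ) ≤ x + t := by linarith
        have hxtH : x + t < Hr := by linarith
        have hnum : 0 < 1 - G (x + t) := by linarith [hGlt (x + t) hxt0 hxtH]
        have hden : 0 < 1 - G x := by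
          have := hGm (by linarith : x ≤ x + t)
          linarith [hGlt (x + t) hxt0 hxtH]
        have hr : 0 < (1 - G (x + t)) / (1 - G x) := div_pos hnum hden
        rw [Set.indicator_of_mem (by exact ⟨hx1, hx2⟩ : x + t ∈ Set.Ioo L (L + ε)), one_mul]
        exact (ENNReal.ofReal_pos.mpr hr).ne'
    exact hfirst.trans_le le_self_add
  · -- mass from arrivals: jump of E at s₀ = t - L
    have hrev := lint_pos_rev' (hmeas2 {L} (measurableSet_singleton L))
      (measurableSet_singleton (t - L)) ?_ hB
    swap
    · intro s hs
      simp only [Function.mem_support, ne_eq] at hs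
      by_contra hne
      have hst : t - s ∉ ({L} : Set ℝ) := by
        simp only [Set.mem_singleton_iff]
        intro h; apply hne; simp only [Set.mem_singleton_iff]; linarith
      rw [Set.indicator_of_notMem hst, zero_mul] at hs
      exact hs rfl
    set s₀ := t - L with hs₀_def
    have hmem : s₀ ∈ Set.Icc (0:ℝ) t := by
      by_contra hmem
      have : ({s₀} : Set ℝ) ∩ Set.Icc (0:ℝ) t = ∅ := by
        ext y; simp only [Set.mem_inter_iff, Set.mem_singleton_iff, Set.mem_empty_iff_false,
          iff_false, not_and]
        rintro rfl; exact hmem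
      rw [this] at hrev; simp at hrev
    have hEs : 0 < E.measure {s₀} :=
      hrev.trans_le (measure_mono Set.inter_subset_left)
    rw [StieltjesFunction.measure_singleton] at hEs
    have hjump : Function.leftLim (fun s => E s) s₀ < E s₀ := by
      have := ENNReal.ofReal_pos.mp hEs
      show Function.leftLim (⇑E) s₀ < E s₀
      linarith
    have hs₀pos : 0 < s₀ := by
      rcases lt_or_eq_of_le hmem.1 with h | h
      · exact h
      · exfalso
        have hE0' : E s₀ = 0 := hE0 s₀ h.symm.le
        have hll : (0:ℝ) ≤ Function.leftLim (⇑E) s₀ := by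
          have h1 : E (s₀ - 1) ≤ Function.leftLim (⇑E) s₀ :=
            E.mono.le_leftLim (by linarith)
          rw [hE0 (s₀ - 1) (by linarith)] at h1
          exact h1
        have := hjump
        simp only [hE0'] at this
        exact absurd this (not_lt.mpr hll)
    refine ⟨min (Hr - L) (s₀ / 2), lt_min (by linarith) (by linarith), fun ε hε hεle => ?_⟩
    have hεH : ε ≤ Hr - L := hεle.trans (min_le_left _ _)
    have hεs : ε < s₀ := lt_of_le_of_lt (hεle.trans (min_le_right _ _)) (by linarith)
    have hEIoo : 0 < E.measure (Set.Ioo (s₀ - ε) s₀) := by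
      rw [StieltjesFunction.measure_Ioo]
      apply ENNReal.ofReal_pos.mpr
      have := hii s₀ hmem.1 hjump ε hε hεs
      show (0:ℝ) < Function.leftLim (⇑E) s₀ - E (s₀ - ε)
      linarith
    rw [hη t htnn (Set.Ioo L (L + ε)) measurableSet_Ioo]
    have hsecond : 0 < ∫⁻ s in Set.Icc (0:ℝ) t,
        Set.indicator (Set.Ioo L (L + ε)) (fun _ => (1:ℝ≥0∞)) (t - s)
          * ENNReal.ofReal (1 - G (t - s)) ∂E.measure := by
      apply lint_pos' (hmeas2 _ measurableSet_Ioo) measurableSet_Ioo ?_ ?_ hEIoo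
      · intro s hs
        constructor
        · linarith [hs.1, hεs]
        · linarith [hs.2, hmem.2]
      · intro s hs
        have h1 : L < t - s := by
          have := hs.2; simp only [hs₀_def] at this ⊢; linarith
        have h2 : t - s < L + ε := by
          have := hs.1; simp only [hs₀_def] at this ⊢; linarith
        have hts0 : (0:ℝ) ≤ t - s := by linarith
        have htsH : t - s < Hr := by linarith
        have hnum : 0 < 1 - G (t - s) := by linarith [hGlt (t - s) hts0 htsH]
        rw [Set.indicator_of_mem (by exact ⟨h1, h2⟩ : t - s ∈ Set.Ioo L (L + ε)), one_mul]
        exact (ENNReal.ofReal_pos.mpr hnum).ne'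
    exact hsecond.trans_le le_add_self
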